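/- For all integers R₁, R₂ ≥ 1 and v₁, v₂ ≥ 0, with u = v₁ + v₂ + 2, the double sum M₁(R₁,R₂) has the integral representation M₁(R₁,R₂) = (1/(R₁R₂)) · [(2v₁+1)!(2v₂+1)!/(2^{2v₁+2v₂} v₁!(v₁+1)!(v₂!)²)] · ∫₀¹ ₃F₂[−R₁, R₁, v₁+3/2; 1/2, v₁+2; x/4] · ₃F₂[−R₂, R₂, v₂+3/2; 3/2, v₂+1; x/4] · x^{u−1} dx. -/

import Mathlib

open Real Filter

/-- The Pochhammer symbol `(a)_k = a(a+1)···(a+k−1)`. -/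
noncomputable def poch (a : ℝ) (k : ℕ) : ℝ := ∏ i ∈ Finset.range k, (a + i)

/-- The terminating hypergeometric sum `₃F₂[−m, b, c; d, e; z]`. -/
noncomputable def F32 (m : ℕ) (b c d e z : ℝ) : ℝ :=
  ∑ k ∈ Finset.range (m+1),
    (poch (-(m:ℝ)) k * poch b k * poch c k) / ((k.factorial : ℝ) * poch d k * poch e k) * z^k

/-- The double sum `M_ν(R1,R2)` (with weight function `ν(a,c)`), where `u = v1+v2+2`. -/
noncomputable def Mnu (ν : ℕ → ℕ → ℝ) (v1 v2 R1 R2 : ℕ) : ℝ :=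
  ∑ a ∈ Finset.range (R1+1), ∑ c ∈ Finset.range (R2+1),
    (-1 : ℝ)^(a+c)
    * ((R1+a-1).factorial / ((2*a).factorial * (R1-a).factorial) : ℝ)
    * ((R2+c-1).factorial / ((2*c+1).factorial * (R2-c).factorial) : ℝ)
    * ((2*v1+2*a+1).factorial / (2^(2*v1+2*a) * (v1+a).factorial * (v1+a+1).factorial) : ℝ)
    * ((2*v2+2*c+1).factorial / (2^(2*v2+2*c) * ((v2+c).factorial)^2) : ℝ)
    * (ν a c / ((v1:ℝ) + v2 + 2 + a + c))

/-- `M₁` is the case `ν(a,c) = 1`. -/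
noncomputable def M1 (v1 v2 R1 R2 : ℕ) : ℝ := Mnu (fun _ _ => 1) v1 v2 R1 R2

lemma poch_succ' (a : ℝ) (k : ℕ) : poch a (k+1) = poch a k * (a + k) := Finset.prod_range_succ _ _
lemma poch_zero' (a : ℝ) : poch a 0 = 1 := Finset.prod_range_zero _

lemma fac_ne (n : ℕ) : ((n.factorial : ℝ)) ≠ 0 := Nat.cast_ne_zero.mpr (Nat.factorial_ne_zero _)

lemma poch_nat_add_one (n : ℕ) : ∀ k, poch ((n:ℝ)+1) k = (n+k).factorial / n.factorial
  | 0 => by simp [poch_zero', div_self (fac_ne n)]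
  | (k+1) => by
    rw [poch_succ', poch_nat_add_one n k]
    have e : ((n+(k+1)).factorial : ℝ) = ((n:ℝ)+k+1) * (n+k).factorial := by
      rw [show n+(k+1) = (n+k)+1 by ring, Nat.factorial_succ]; push_cast; ring
    rw [e, div_mul_eq_mul_div, div_eq_div_iff (fac_ne n) (fac_ne n)]
    ring

lemma poch_neg_nat (n : ℕ) : ∀ k, k ≤ n → poch (-(n:ℝ)) k = (-1)^k * n.factorial / (n-k).factorial
  | 0, _ => by simp [poch_zero', div_self (fac_ne n)]
  | (k+1), h => by
    have hk : k ≤ n := Nat.le_of_succ_le h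
    rw [poch_succ', poch_neg_nat n k hk]
    have h2 : (-(n:ℝ) + k) = -(((n-(k+1):ℕ):ℝ)+1) := by push_cast [Nat.cast_sub h]; ring
    have e : ((n-k).factorial : ℝ) = (((n-(k+1):ℕ):ℝ) + 1) * ((n-(k+1)).factorial) := by
      rw [show n - k = (n-(k+1))+1 by omega, Nat.factorial_succ]; push_cast; ring
    rw [h2, e, div_mul_eq_mul_div, div_eq_div_iff (by positivity) (fac_ne _)]
    ring

lemma poch_half (k : ℕ) : poch (1/2 : ℝ) k = (2*k).factorial / (4^k * k.factorial) := by
  induction k with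
  | zero => simp [poch_zero']
  | succ k ih =>
    rw [poch_succ', ih]
    have e : ((2*(k+1)).factorial : ℝ) = (2*(k:ℝ)+2) * ((2*(k:ℝ)+1) * (2*k).factorial) := by
      rw [show 2*(k+1) = (2*k+1)+1 by ring, Nat.factorial_succ, Nat.factorial_succ]; push_cast; ring
    have e2 : ((k+1).factorial : ℝ) = ((k:ℝ)+1) * k.factorial := by
      rw [Nat.factorial_succ]; push_cast; ring
    rw [e, e2, div_mul_eq_mul_div, div_eq_div_iff (by positivity) (by positivity)]
    ring

lemma poch_add_threehalf (v : ℕ) (k : ℕ) :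
    poch ((v:ℝ) + 3/2) k =
      (2*v+2*k+1).factorial * v.factorial / ((2*v+1).factorial * (v+k).factorial * 4^k) := by
  induction k with
  | zero =>
    simp only [poch_zero', Nat.mul_zero, Nat.add_zero, pow_zero, mul_one]
    rw [mul_comm ((2*v+1).factorial : ℝ), div_self (by positivity)]
  | succ k ih =>
    rw [poch_succ', ih]
    have e : ((2*v+2*(k+1)+1).factorial : ℝ)
        = (2*(v:ℝ)+2*k+3) * ((2*(v:ℝ)+2*k+2) * (2*v+2*k+1).factorial) := by
      rw [show 2*v+2*(k+1)+1 = ((2*v+2*k+1)+1)+1 by ring, Nat.factorial_succ, Nat.factorial_succ]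
      push_cast; ring
    have e2 : ((v+(k+1)).factorial : ℝ) = ((v:ℝ)+k+1) * (v+k).factorial := by
      rw [show v+(k+1) = (v+k)+1 by ring, Nat.factorial_succ]; push_cast; ring
    rw [e, e2, div_mul_eq_mul_div, div_eq_div_iff (by positivity) (by positivity)]
    ring

lemma integral_poly (m1 m2 n : ℕ) (A B : ℕ → ℝ) :
    (∫ x in (0:ℝ)..1, (∑ a ∈ Finset.range (m1+1), A a * (x/4)^a) *
      (∑ c ∈ Finset.range (m2+1), B c * (x/4)^c) * x^n)
    = ∑ a ∈ Finset.range (m1+1), ∑ c ∈ Finset.range (m2+1),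
        A a * B c / (4^(a+c) * ((n:ℝ)+1+a+c)) := by
  have hfun : ∀ x:ℝ, (∑ a ∈ Finset.range (m1+1), A a * (x/4)^a) *
      (∑ c ∈ Finset.range (m2+1), B c * (x/4)^c) * x^n
      = ∑ a ∈ Finset.range (m1+1), ∑ c ∈ Finset.range (m2+1),
          (A a * B c / 4^(a+c)) * x^(a+c+n) := by
    intro x
    rw [Finset.sum_mul_sum, Finset.sum_mul]
    refine Finset.sum_congr rfl fun a _ => ?_
    rw [Finset.sum_mul]
    refine Finset.sum_congr rfl fun c _ => ?_
    rw [div_pow, div_pow, pow_add, pow_add x]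
    have h1 : (4:ℝ)^a ≠ 0 := by positivity
    have h2 : (4:ℝ)^c ≠ 0 := by positivity
    field_simp
    ring
  simp only [hfun]
  rw [intervalIntegral.integral_finset_sum (fun a _ => Continuous.intervalIntegrable
    (show Continuous fun x : ℝ => ∑ c ∈ Finset.range (m2+1), A a * B c / 4^(a+c) * x^(a+c+n) from
      continuous_finset_sum _ fun c _ => continuous_const.mul (continuous_pow _)) _ _)]
  refine Finset.sum_congr rfl fun a _ => ?_
  rw [intervalIntegral.integral_finset_sum (fun c _ => Continuous.intervalIntegrable
    (show Continuous fun x : ℝ => A a * B c / 4^(a+c) * x^(a+c+n) from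
      continuous_const.mul (continuous_pow _)) _ _)]
  refine Finset.sum_congr rfl fun c _ => ?_
  rw [intervalIntegral.integral_const_mul, integral_pow]
  have h1 : (4:ℝ)^(a+c) ≠ 0 := by positivity
  have h2 : ((n:ℝ)+1+a+c) ≠ 0 := by positivity
  rw [one_pow, zero_pow (by omega : a+c+n+1 ≠ 0), sub_zero]
  push_cast
  field_simp
  ring

set_option maxHeartbeats 2000000 in
theorem M1_integral_representation (R1 R2 v1 v2 : ℕ) (hR1 : 1 ≤ R1) (hR2 : 1 ≤ R2) :
    M1 v1 v2 R1 R2 =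
      (1 / ((R1:ℝ) * R2)) *
        (((2*v1+1).factorial * (2*v2+1).factorial : ℝ) /
          (2^(2*v1+2*v2) * v1.factorial * (v1+1).factorial * (v2.factorial)^2)) *
        ∫ x in (0:ℝ)..1,
          F32 R1 (R1:ℝ) ((v1:ℝ) + 3/2) (1/2) ((v1:ℝ) + 2) (x/4) *
          F32 R2 (R2:ℝ) ((v2:ℝ) + 3/2) (3/2) ((v2:ℝ) + 1) (x/4) *
          x ^ (v1+v2+1) := by
  obtain ⟨r1, rfl⟩ : ∃ r, R1 = r + 1 := ⟨R1 - 1, by omega⟩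
  obtain ⟨r2, rfl⟩ : ∃ r, R2 = r + 1 := ⟨R2 - 1, by omega⟩
  have hI : (∫ x in (0:ℝ)..1,
      F32 (r1+1) ((r1+1:ℕ):ℝ) ((v1:ℝ) + 3/2) (1/2) ((v1:ℝ) + 2) (x/4) *
      F32 (r2+1) ((r2+1:ℕ):ℝ) ((v2:ℝ) + 3/2) (3/2) ((v2:ℝ) + 1) (x/4) *
      x ^ (v1+v2+1))
      = ∑ a ∈ Finset.range (r1+1+1), ∑ c ∈ Finset.range (r2+1+1),
        ((poch (-((r1+1:ℕ):ℝ)) a * poch ((r1+1:ℕ):ℝ) a * poch ((v1:ℝ)+3/2) a) /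
          ((a.factorial : ℝ) * poch (1/2) a * poch ((v1:ℝ)+2) a)) *
        ((poch (-((r2+1:ℕ):ℝ)) c * poch ((r2+1:ℕ):ℝ) c * poch ((v2:ℝ)+3/2) c) /
          ((c.factorial : ℝ) * poch (3/2) c * poch ((v2:ℝ)+1) c)) /
        (4^(a+c) * (((v1+v2+1:ℕ):ℝ)+1+a+c)) := by
    simp only [F32]
    exact integral_poly (r1+1) (r2+1) (v1+v2+1) _ _
  rw [hI]
  unfold M1 Mnu
  rw [Finset.mul_sum]
  refine Finset.sum_congr rfl fun a ha => ?_
  rw [Finset.mul_sum]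
  refine Finset.sum_congr rfl fun c hc => ?_
  have ha' : a ≤ r1 + 1 := by simpa using Nat.lt_succ_iff.mp (Finset.mem_range.mp ha)
  have hc' : c ≤ r2 + 1 := by simpa using Nat.lt_succ_iff.mp (Finset.mem_range.mp hc)
  rw [poch_neg_nat (r1+1) a ha', poch_neg_nat (r2+1) c hc']
  rw [show ((r1+1:ℕ):ℝ) = (r1:ℝ)+1 by push_cast; ring,
      show ((r2+1:ℕ):ℝ) = (r2:ℝ)+1 by push_cast; ring]
  rw [poch_nat_add_one r1 a, poch_nat_add_one r2 c]
  rw [poch_add_threehalf v1 a, poch_add_threehalf v2 c, poch_half a]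
  rw [show (3/2:ℝ) = ((0:ℕ):ℝ) + 3/2 by norm_num, poch_add_threehalf 0 c]
  rw [show (v1:ℝ)+2 = ((v1+1:ℕ):ℝ)+1 by push_cast; ring, poch_nat_add_one (v1+1) a]
  rw [poch_nat_add_one v2 c]
  simp only [Nat.mul_zero, Nat.zero_add, Nat.zero_mul, Nat.add_zero, Nat.factorial_zero,
    Nat.factorial_one, Nat.cast_one, mul_one, one_mul]
  rw [show r1+1+a-1 = r1+a by omega, show r2+1+c-1 = r2+c by omega]
  have e1 : (((r1+1).factorial : ℝ)) = ((r1:ℝ)+1) * r1.factorial := by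
    rw [Nat.factorial_succ]; push_cast; ring
  have e2 : (((r2+1).factorial : ℝ)) = ((r2:ℝ)+1) * r2.factorial := by
    rw [Nat.factorial_succ]; push_cast; ring
  rw [e1, e2]
  rw [show (4:ℝ) = 2^2 by norm_num]
  simp only [← pow_mul]
  have n1 := fac_ne (2*a); have n2 := fac_ne (r1+1-a); have n3 := fac_ne (2*c+1)
  have n4 := fac_ne (r2+1-c); have n5 := fac_ne (v1+a); have n6 := fac_ne (v1+a+1)
  have n7 := fac_ne (v2+c); have n8 := fac_ne v1; have n9 := fac_ne (v1+1)
  have n10 := fac_ne v2; have n11 := fac_ne r1; have n12 := fac_ne r2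
  have n13 := fac_ne (2*v1+1); have n14 := fac_ne (2*v2+1)
  have n15 := fac_ne (2*v1+2*a+1); have n16 := fac_ne (2*v2+2*c+1)
  have n17 := fac_ne a; have n18 := fac_ne c
  have n19 := fac_ne (r1+a); have n20 := fac_ne (r2+c); have n21 := fac_ne (v1+1+a)
  have p1 : ((r1:ℝ)+1) ≠ 0 := by positivity
  have p2 : ((r2:ℝ)+1) ≠ 0 := by positivity
  have p3 : ((v1:ℝ) + v2 + 2 + a + c) ≠ 0 := by positivity
  have p4 : (((v1+v2+1:ℕ):ℝ)+1+a+c) ≠ 0 := by positivity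
  have p5 : (2:ℝ) ≠ 0 := two_ne_zero
  push_cast
  field_simp
  ring
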